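/- arXiv:2106.10255 — 6 statements merged into one kernel-verified Lean document; each statement's English description precedes it below -/
import Mathlib

section
/- Fix 0 < p and σ₁,…,σ_n > 0, and define S_t = diag((1-t+tσ₁^{-p})^{-1/p}, …, (1-t+tσ_n^{-p})^{-1/p}) for t ∈ [0,1]. Then for each nonzero x ∈ ℝⁿ, the map t ↦ |S_t x|^{-p} is concave on [0,1]. -/
open Finset Real

private lemma sum_pos_aux {n : ℕ} (q : ℝ) (c a : Fin n → ℝ) (hc : ∀ k, 0 ≤ c k)
    (hcx : ∃ k, 0 < c k) (ha : ∀ k, 0 < a k) :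
    0 < ∑ k, c k * a k ^ (-q) := by
  obtain ⟨k, hk⟩ := hcx
  apply Finset.sum_pos' (fun i _ => mul_nonneg (hc i) (Real.rpow_nonneg (ha i).le _))
  exact ⟨k, Finset.mem_univ k, mul_pos hk (Real.rpow_pos_of_pos (ha k) _)⟩

private lemma prod_aux {q : ℝ} (hq : 0 < q) {c a m : ℝ} (hc : 0 ≤ c) (ha : 0 < a)
    (hm : 0 < m) :
    (c * a ^ (-q)) ^ (1/(q+1)) * (c * m ^ (-(q+1)) * a) ^ (q/(q+1)) = c * m ^ (-q) := by
  rcases eq_or_lt_of_le hc with h | hc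
  · rw [← h]
    rw [zero_mul, zero_mul, zero_mul, Real.zero_rpow (by positivity),
      Real.zero_rpow (by positivity), zero_mul, zero_mul]
  · have h1 : (c * a ^ (-q)) ^ (1/(q+1)) = c ^ (1/(q+1)) * a ^ (-q * (1/(q+1))) := by
      rw [Real.mul_rpow hc.le (Real.rpow_nonneg ha.le _), ← Real.rpow_mul ha.le]
    have h2 : (c * m ^ (-(q+1)) * a) ^ (q/(q+1)) =
        c ^ (q/(q+1)) * m ^ (-(q+1) * (q/(q+1))) * a ^ (q/(q+1)) := by
      rw [Real.mul_rpow (mul_nonneg hc.le (Real.rpow_nonneg hm.le _)) ha.le,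
        Real.mul_rpow hc.le (Real.rpow_nonneg hm.le _), ← Real.rpow_mul hm.le]
    have hq1 : q + 1 ≠ 0 := by positivity
    have e1 : 1/(q+1) + q/(q+1) = 1 := by field_simp <;> ring
    have e2 : -q * (1/(q+1)) + q/(q+1) = 0 := by field_simp <;> ring
    have e3 : -(q+1) * (q/(q+1)) = -q := by field_simp <;> ring
    rw [h1, h2]
    calc c ^ (1/(q+1)) * a ^ (-q * (1/(q+1))) *
          (c ^ (q/(q+1)) * m ^ (-(q+1) * (q/(q+1))) * a ^ (q/(q+1)))
        = (c ^ (1/(q+1)) * c ^ (q/(q+1))) * (a ^ (-q * (1/(q+1))) * a ^ (q/(q+1))) *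
            m ^ (-(q+1) * (q/(q+1))) := by ring
      _ = c * m ^ (-q) := by
          rw [← Real.rpow_add hc, ← Real.rpow_add ha, e1, e2, e3, Real.rpow_one,
            Real.rpow_zero, mul_one]

private lemma holder_aux {n : ℕ} {q : ℝ} (hq : 0 < q) (c a m : Fin n → ℝ)
    (hc : ∀ k, 0 ≤ c k) (ha : ∀ k, 0 < a k) (hm : ∀ k, 0 < m k) :
    ∑ k, c k * m k ^ (-q) ≤
      (∑ k, c k * a k ^ (-q)) ^ (1/(q+1)) *
        (∑ k, c k * m k ^ (-(q+1)) * a k) ^ (q/(q+1)) := by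
  have hq1 : (0:ℝ) < q + 1 := by positivity
  have hpq : Real.HolderConjugate (q+1) ((q+1)/q) := by
    rw [Real.holderConjugate_iff_eq_conjExponent (by linarith)]
    congr 1; ring
  have H := Real.inner_le_Lp_mul_Lq Finset.univ
      (fun k => (c k * a k ^ (-q)) ^ (1/(q+1)))
      (fun k => (c k * m k ^ (-(q+1)) * a k) ^ (q/(q+1))) hpq
  have hf : ∀ k : Fin n, |(c k * a k ^ (-q)) ^ (1/(q+1))| ^ (q+1) = c k * a k ^ (-q) := by
    intro k
    have h0 : 0 ≤ c k * a k ^ (-q) := mul_nonneg (hc k) (Real.rpow_nonneg (ha k).le _)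
    rw [abs_of_nonneg (Real.rpow_nonneg h0 _), ← Real.rpow_mul h0, one_div,
      inv_mul_cancel₀ hq1.ne', Real.rpow_one]
  have hg : ∀ k : Fin n, |(c k * m k ^ (-(q+1)) * a k) ^ (q/(q+1))| ^ ((q+1)/q) =
      c k * m k ^ (-(q+1)) * a k := by
    intro k
    have h0 : 0 ≤ c k * m k ^ (-(q+1)) * a k :=
      mul_nonneg (mul_nonneg (hc k) (Real.rpow_nonneg (hm k).le _)) (ha k).le
    rw [abs_of_nonneg (Real.rpow_nonneg h0 _), ← Real.rpow_mul h0,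
      show q/(q+1) * ((q+1)/q) = 1 by field_simp <;> ring, Real.rpow_one]
  simp only [hf, hg] at H
  calc ∑ k, c k * m k ^ (-q)
      = ∑ k : Fin n, (c k * a k ^ (-q)) ^ (1/(q+1)) *
          (c k * m k ^ (-(q+1)) * a k) ^ (q/(q+1)) :=
        Finset.sum_congr rfl fun k _ => (prod_aux hq (hc k) (ha k) (hm k)).symm
    _ ≤ (∑ k, c k * a k ^ (-q)) ^ (1/(q+1)) *
          (∑ k, c k * m k ^ (-(q+1)) * a k) ^ (1/((q+1)/q)) := H
    _ = _ := by rw [one_div_div]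

private lemma T_bound {n : ℕ} {q : ℝ} (hq : 0 < q) (c a w : Fin n → ℝ)
    (hc : ∀ k, 0 ≤ c k) (hcx : ∃ k, 0 < c k) (ha : ∀ k, 0 < a k) (hw : ∀ k, 0 < w k) :
    (∑ k, c k * w k ^ (-q)) ^ ((q+1)/q) * (∑ k, c k * a k ^ (-q)) ^ (-(1/q)) ≤
      ∑ k, c k * w k ^ (-(q+1)) * a k := by
  have hSa : 0 < ∑ k, c k * a k ^ (-q) := sum_pos_aux q c a hc hcx ha
  have hSw : 0 < ∑ k, c k * w k ^ (-q) := sum_pos_aux q c w hc hcx hw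
  have hT0 : 0 ≤ ∑ k, c k * w k ^ (-(q+1)) * a k :=
    Finset.sum_nonneg fun k _ =>
      mul_nonneg (mul_nonneg (hc k) (Real.rpow_nonneg (hw k).le _)) (ha k).le
  have hold := holder_aux hq c a w hc ha hw
  have h2 : (∑ k, c k * w k ^ (-q)) ^ ((q+1)/q) ≤
      (∑ k, c k * a k ^ (-q)) ^ (1/q) * (∑ k, c k * w k ^ (-(q+1)) * a k) := by
    have := Real.rpow_le_rpow hSw.le hold (by positivity : (0:ℝ) ≤ (q+1)/q)
    rwa [Real.mul_rpow (Real.rpow_nonneg hSa.le _) (Real.rpow_nonneg hT0 _),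
      ← Real.rpow_mul hSa.le, ← Real.rpow_mul hT0,
      show 1/(q+1) * ((q+1)/q) = 1/q by field_simp <;> ring,
      show q/(q+1) * ((q+1)/q) = 1 by field_simp <;> ring, Real.rpow_one] at this
  have h3 := mul_le_mul_of_nonneg_right h2 (Real.rpow_nonneg hSa.le (-(1/q)))
  calc (∑ k, c k * w k ^ (-q)) ^ ((q+1)/q) * (∑ k, c k * a k ^ (-q)) ^ (-(1/q))
      ≤ (∑ k, c k * a k ^ (-q)) ^ (1/q) * (∑ k, c k * w k ^ (-(q+1)) * a k) *
          (∑ k, c k * a k ^ (-q)) ^ (-(1/q)) := h3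
    _ = ((∑ k, c k * a k ^ (-q)) ^ (1/q) * (∑ k, c k * a k ^ (-q)) ^ (-(1/q))) *
          (∑ k, c k * w k ^ (-(q+1)) * a k) := by ring
    _ = ∑ k, c k * w k ^ (-(q+1)) * a k := by
        rw [← Real.rpow_add hSa, add_neg_cancel, Real.rpow_zero, one_mul]

private lemma key_concave {n : ℕ} {q : ℝ} (hq : 0 < q) (c a b : Fin n → ℝ)
    (hc : ∀ k, 0 ≤ c k) (hcx : ∃ k, 0 < c k) (ha : ∀ k, 0 < a k) (hb : ∀ k, 0 < b k)
    {l m : ℝ} (hl : 0 ≤ l) (hm : 0 ≤ m) (hlm : l + m = 1) :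
    l * (∑ k, c k * a k ^ (-q)) ^ (-(1/q)) + m * (∑ k, c k * b k ^ (-q)) ^ (-(1/q)) ≤
      (∑ k, c k * (l * a k + m * b k) ^ (-q)) ^ (-(1/q)) := by
  set w : Fin n → ℝ := fun k => l * a k + m * b k with hwdef
  have hw : ∀ k, 0 < w k := by
    intro k
    have h1 := ha k; have h2 := hb k
    have h3 : 0 ≤ l * a k := mul_nonneg hl h1.le
    have h4 : 0 ≤ m * b k := mul_nonneg hm h2.le
    rcases eq_or_lt_of_le hl with h | h
    · have : m = 1 := by linarith
      simp only [hwdef, ← h, zero_mul, zero_add, this, one_mul]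
      exact h2
    · have : 0 < l * a k := mul_pos h h1
      simp only [hwdef]; linarith
  have hSw : 0 < ∑ k, c k * w k ^ (-q) := sum_pos_aux q c w hc hcx hw
  have hSa : 0 < ∑ k, c k * a k ^ (-q) := sum_pos_aux q c a hc hcx ha
  have hSb : 0 < ∑ k, c k * b k ^ (-q) := sum_pos_aux q c b hc hcx hb
  have TA := T_bound hq c a w hc hcx ha hw
  have TB := T_bound hq c b w hc hcx hb hw
  have hsum : l * (∑ k, c k * w k ^ (-(q+1)) * a k) +
      m * (∑ k, c k * w k ^ (-(q+1)) * b k) = ∑ k, c k * w k ^ (-q) := by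
    rw [Finset.mul_sum, Finset.mul_sum, ← Finset.sum_add_distrib]
    refine Finset.sum_congr rfl fun k _ => ?_
    have hww : w k ^ (-(q+1)) * w k = w k ^ (-q) := by
      rw [show (-q : ℝ) = -(q+1) + 1 by ring, Real.rpow_add_one (hw k).ne']
    calc l * (c k * w k ^ (-(q+1)) * a k) + m * (c k * w k ^ (-(q+1)) * b k)
        = c k * (w k ^ (-(q+1)) * (l * a k + m * b k)) := by ring
      _ = c k * (w k ^ (-(q+1)) * w k) := rfl
      _ = c k * w k ^ (-q) := by rw [hww]
  have main : (∑ k, c k * w k ^ (-q)) ^ ((q+1)/q) *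
      (l * (∑ k, c k * a k ^ (-q)) ^ (-(1/q)) + m * (∑ k, c k * b k ^ (-q)) ^ (-(1/q))) ≤
      ∑ k, c k * w k ^ (-q) := by
    calc (∑ k, c k * w k ^ (-q)) ^ ((q+1)/q) *
        (l * (∑ k, c k * a k ^ (-q)) ^ (-(1/q)) + m * (∑ k, c k * b k ^ (-q)) ^ (-(1/q)))
        = l * ((∑ k, c k * w k ^ (-q)) ^ ((q+1)/q) * (∑ k, c k * a k ^ (-q)) ^ (-(1/q))) +
            m * ((∑ k, c k * w k ^ (-q)) ^ ((q+1)/q) * (∑ k, c k * b k ^ (-q)) ^ (-(1/q))) := by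
          ring
      _ ≤ l * (∑ k, c k * w k ^ (-(q+1)) * a k) + m * (∑ k, c k * w k ^ (-(q+1)) * b k) :=
          add_le_add (mul_le_mul_of_nonneg_left TA hl) (mul_le_mul_of_nonneg_left TB hm)
      _ = ∑ k, c k * w k ^ (-q) := hsum
  have main' : (∑ k, c k * w k ^ (-q)) ^ ((q+1)/q) *
      (l * (∑ k, c k * a k ^ (-q)) ^ (-(1/q)) + m * (∑ k, c k * b k ^ (-q)) ^ (-(1/q))) ≤
      (∑ k, c k * w k ^ (-q)) ^ ((q+1)/q) * (∑ k, c k * w k ^ (-q)) ^ (-(1/q)) := by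
    calc _ ≤ ∑ k, c k * w k ^ (-q) := main
      _ = _ := by
        rw [← Real.rpow_add hSw, show (q+1)/q + -(1/q) = 1 by field_simp <;> ring,
          Real.rpow_one]
  exact le_of_mul_le_mul_left main' (Real.rpow_pos_of_pos hSw _)

theorem stmt_7 (n : ℕ) (p : ℝ) (hp : 0 < p) (σ : Fin n → ℝ) (hσ : ∀ k, 0 < σ k)
    (x : Fin n → ℝ) (hx : x ≠ 0) :
    ConcaveOn ℝ (Set.Icc (0:ℝ) 1) (fun t : ℝ =>
      (Real.sqrt (∑ k, ((1 - t + t * σ k ^ (-p)) ^ (-(1/p))) ^ 2 * (x k) ^ 2)) ^ (-p)) := by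
  set q : ℝ := 2 / p with hqdef
  have hq : 0 < q := by positivity
  have hat : ∀ t ∈ Set.Icc (0:ℝ) 1, ∀ k, 0 < 1 - t + t * σ k ^ (-p) := by
    intro t ht k
    have hs : 0 < σ k ^ (-p) := Real.rpow_pos_of_pos (hσ k) _
    rcases lt_or_ge t 1 with h | h
    · nlinarith [mul_nonneg ht.1 hs.le]
    · have h1 : t = 1 := le_antisymm ht.2 h
      rw [h1]; linarith
  have hc : ∀ k, 0 ≤ (x k) ^ 2 := fun k => sq_nonneg _
  have hcx : ∃ k, 0 < (x k) ^ 2 := by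
    obtain ⟨k, hk⟩ := Function.ne_iff.mp hx
    exact ⟨k, pow_two_pos_of_ne_zero hk⟩
  have hfe : ∀ t ∈ Set.Icc (0:ℝ) 1,
      (Real.sqrt (∑ k, ((1 - t + t * σ k ^ (-p)) ^ (-(1/p))) ^ 2 * (x k) ^ 2)) ^ (-p) =
      (∑ k, (x k) ^ 2 * (1 - t + t * σ k ^ (-p)) ^ (-q)) ^ (-(1/q)) := by
    intro t ht
    have hterm : ∀ k : Fin n, ((1 - t + t * σ k ^ (-p)) ^ (-(1/p))) ^ 2 * (x k) ^ 2 =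
        (x k) ^ 2 * (1 - t + t * σ k ^ (-p)) ^ (-q) := by
      intro k
      have h0 := hat t ht k
      rw [show (((1 - t + t * σ k ^ (-p)) ^ (-(1/p))) ^ 2 : ℝ) =
          ((1 - t + t * σ k ^ (-p)) ^ (-(1/p))) ^ ((2:ℕ) : ℝ) from
        (Real.rpow_natCast _ 2).symm, ← Real.rpow_mul h0.le]
      rw [show (-(1/p) * ((2:ℕ) : ℝ)) = -q by push_cast [hqdef]; ring]
      ring
    rw [Finset.sum_congr rfl fun k _ => hterm k]
    have hS0 : 0 ≤ ∑ k, (x k) ^ 2 * (1 - t + t * σ k ^ (-p)) ^ (-q) :=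
      Finset.sum_nonneg fun k _ =>
        mul_nonneg (hc k) (Real.rpow_nonneg (hat t ht k).le _)
    rw [Real.sqrt_eq_rpow, ← Real.rpow_mul hS0,
      show (1/(2:ℝ)) * (-p) = -(1/q) by rw [hqdef]; field_simp <;> ring]
  constructor
  · exact convex_Icc 0 1
  · intro t ht s hs l m hl hm hlm
    simp only [smul_eq_mul]
    have hmem : l * t + m * s ∈ Set.Icc (0:ℝ) 1 := (convex_Icc (0:ℝ) 1) ht hs hl hm hlm
    rw [hfe t ht, hfe s hs, hfe _ hmem]
    have haff : ∀ k : Fin n, 1 - (l * t + m * s) + (l * t + m * s) * σ k ^ (-p) =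
        l * (1 - t + t * σ k ^ (-p)) + m * (1 - s + s * σ k ^ (-p)) := by
      intro k
      linear_combination -hlm
    have hsumeq : ∑ k, (x k) ^ 2 * (1 - (l * t + m * s) + (l * t + m * s) * σ k ^ (-p)) ^ (-q)
        = ∑ k, (x k) ^ 2 *
            (l * (1 - t + t * σ k ^ (-p)) + m * (1 - s + s * σ k ^ (-p))) ^ (-q) :=
      Finset.sum_congr rfl fun k _ => by rw [haff k]
    rw [hsumeq]
    exact key_concave hq (fun k => (x k) ^ 2) (fun k => 1 - t + t * σ k ^ (-p))
      (fun k => 1 - s + s * σ k ^ (-p)) hc hcx (hat t ht) (hat s hs) hl hm hlm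
end

section
/- Let M be a real invertible n×n matrix (n ≥ 2) and set q = 2/(n-1). Then ‖M^{-1}‖_{q,n} ≤ ‖M‖_{2,n}^{n-1} / |det M|, where ‖A‖_{p,n} = ((1/n)·Σ_k σ_k(A)^p)^{1/p}. -/
open Matrix

/-- Singular values of a real square matrix: square roots of the eigenvalues of `Aᵀ * A`. -/
noncomputable def singularValues {n : ℕ} (A : Matrix (Fin n) (Fin n) ℝ) : Fin n → ℝ :=
  fun k => Real.sqrt ((show (Aᵀ * A).IsHermitian by
    rw [IsHermitian, conjTranspose_eq_transpose_of_trivial, transpose_mul, transpose_transpose]).eigenvalues k)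

/-- Normalized Schatten p-norm. -/
noncomputable def schattenNorm {n : ℕ} (p : ℝ) (A : Matrix (Fin n) (Fin n) ℝ) : ℝ :=
  ((1 / (n : ℝ)) * ∑ k, (singularValues A k) ^ p) ^ (1 / p)

section AuxLemmas
open Polynomial
variable {n : ℕ}

lemma my_charpoly_diagonal (d : Fin n → ℝ) :
    (Matrix.diagonal d).charpoly = ∏ i, (X - Polynomial.C (d i)) := by
  have h : charmatrix (Matrix.diagonal d) = Matrix.diagonal (fun i => X - Polynomial.C (d i)) := by
    ext i j
    by_cases hij : i = j
    · subst hij; simp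
    · simp [charmatrix_apply, Matrix.diagonal_apply_ne _ hij]
  rw [Matrix.charpoly, h, Matrix.det_diagonal]

lemma my_charpoly_conj (C A : Matrix (Fin n) (Fin n) ℝ) (hC : IsUnit C) :
    (C * A * C⁻¹).charpoly = A.charpoly := by
  have hCd : IsUnit C.det := (Matrix.isUnit_iff_isUnit_det _).1 hC
  have h1 : C * C⁻¹ = 1 := Matrix.mul_nonsing_inv _ hCd
  set f := ((Polynomial.C : ℝ →+* ℝ[X]).mapMatrix : Matrix (Fin n) (Fin n) ℝ →+* Matrix (Fin n) (Fin n) ℝ[X])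
  have hcomm : ∀ B : Matrix (Fin n) (Fin n) ℝ[X],
      Matrix.scalar (Fin n) (X : ℝ[X]) * B = B * Matrix.scalar (Fin n) (X : ℝ[X]) := by
    intro B
    exact (Matrix.scalar_commute (X : ℝ[X]) (fun r' => Commute.all _ _) B).eq
  have key : f C * charmatrix A * f C⁻¹ = charmatrix (C * A * C⁻¹) := by
    show f C * (Matrix.scalar (Fin n) (X : ℝ[X]) - f A) * f C⁻¹
        = Matrix.scalar (Fin n) (X : ℝ[X]) - f (C * A * C⁻¹)
    rw [mul_sub, sub_mul]
    congr 1
    · rw [← hcomm (f C), mul_assoc, ← _root_.map_mul f, h1, _root_.map_one f, mul_one]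
    · rw [← _root_.map_mul f, ← _root_.map_mul f]
  have hdet1 : (f C).det * (f C⁻¹).det = 1 := by
    rw [← Matrix.det_mul, ← _root_.map_mul f, h1, _root_.map_one f, Matrix.det_one]
  rw [Matrix.charpoly, Matrix.charpoly, ← key, Matrix.det_mul, Matrix.det_mul,
    mul_right_comm, hdet1, one_mul]

lemma my_charpoly_hermitian {B : Matrix (Fin n) (Fin n) ℝ} (hB : B.IsHermitian) :
    B.charpoly = ∏ i, (X - Polynomial.C (hB.eigenvalues i)) := by
  have hsp := hB.spectral_theorem
  set U : Matrix (Fin n) (Fin n) ℝ := (hB.eigenvectorUnitary : Matrix (Fin n) (Fin n) ℝ) with hUdef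
  have hU2 : U * star U = 1 := (Matrix.mem_unitaryGroup_iff).1 hB.eigenvectorUnitary.2
  have hUinv : U⁻¹ = star U := Matrix.inv_eq_right_inv hU2
  have hUu : IsUnit U := (Matrix.isUnit_iff_isUnit_det U).2 (IsUnit.of_mul_eq_one _ (by rw [← Matrix.det_mul, hU2, Matrix.det_one]))
  have hdiag : Matrix.diagonal (RCLike.ofReal ∘ hB.eigenvalues) = Matrix.diagonal hB.eigenvalues := by
    congr 1
  calc B.charpoly = (U * Matrix.diagonal hB.eigenvalues * U⁻¹).charpoly := by
        rw [hUinv, ← hdiag]; exact congrArg Matrix.charpoly hsp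
    _ = (Matrix.diagonal hB.eigenvalues).charpoly := my_charpoly_conj _ _ hUu
    _ = ∏ i, (X - Polynomial.C (hB.eigenvalues i)) := my_charpoly_diagonal _

lemma my_sum_comp_eq {μ ν : Fin n → ℝ}
    (h : ∏ i, (X - Polynomial.C (μ i)) = ∏ i, (X - Polynomial.C (ν i))) (f : ℝ → ℝ) :
    ∑ i, f (μ i) = ∑ i, f (ν i) := by
  have hm : Multiset.map μ Finset.univ.val = Multiset.map ν Finset.univ.val := by
    have h2 := congrArg Polynomial.roots h
    rwa [Finset.prod_eq_multiset_prod, Finset.prod_eq_multiset_prod,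
      show (Multiset.map (fun i => X - Polynomial.C (μ i)) Finset.univ.val)
          = Multiset.map (fun a => X - Polynomial.C a) (Multiset.map μ Finset.univ.val) by
        rw [Multiset.map_map]; rfl,
      show (Multiset.map (fun i => X - Polynomial.C (ν i)) Finset.univ.val)
          = Multiset.map (fun a => X - Polynomial.C a) (Multiset.map ν Finset.univ.val) by
        rw [Multiset.map_map]; rfl,
      Polynomial.roots_multiset_prod_X_sub_C, Polynomial.roots_multiset_prod_X_sub_C] at h2
  calc ∑ i, f (μ i) = (Multiset.map f (Multiset.map μ Finset.univ.val)).sum := by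
        rw [Multiset.map_map]; rfl
    _ = (Multiset.map f (Multiset.map ν Finset.univ.val)).sum := by rw [hm]
    _ = ∑ i, f (ν i) := by rw [Multiset.map_map]; rfl

lemma my_key_charpoly_eq (M : Matrix (Fin n) (Fin n) ℝ) (hM : IsUnit M) :
    (∏ i, (X - Polynomial.C ((Matrix.isHermitian_conjTranspose_mul_self M⁻¹).eigenvalues i)))
      = ∏ i, (X - Polynomial.C (((Matrix.isHermitian_conjTranspose_mul_self M).eigenvalues i)⁻¹)) := by
  have hB' := Matrix.isHermitian_conjTranspose_mul_self M⁻¹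
  have hB := Matrix.isHermitian_conjTranspose_mul_self M
  rw [← my_charpoly_hermitian hB']
  -- step 1: M⁻¹ᴴ * M⁻¹ = M * (Mᴴ * M)⁻¹ * M⁻¹
  have e1 : M⁻¹ᴴ * M⁻¹ = M * (Mᴴ * M)⁻¹ * M⁻¹ := by
    rw [Matrix.mul_inv_rev, Matrix.conjTranspose_nonsing_inv, ← mul_assoc,
      Matrix.mul_nonsing_inv _ ((Matrix.isUnit_iff_isUnit_det _).1 hM), one_mul]
  rw [e1, my_charpoly_conj M _ hM]
  -- step 2: spectral theorem for Mᴴ * M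
  set U : Matrix (Fin n) (Fin n) ℝ := (hB.eigenvectorUnitary : Matrix (Fin n) (Fin n) ℝ) with hUdef
  have hU2 : U * star U = 1 := (Matrix.mem_unitaryGroup_iff).1 hB.eigenvectorUnitary.2
  have hU2' : star U * U = 1 := (Matrix.mem_unitaryGroup_iff').1 hB.eigenvectorUnitary.2
  have hUinv : U⁻¹ = star U := Matrix.inv_eq_right_inv hU2
  have hsUinv : (star U)⁻¹ = U := Matrix.inv_eq_right_inv hU2'
  have hUu : IsUnit U := (Matrix.isUnit_iff_isUnit_det U).2
    (IsUnit.of_mul_eq_one _ (by rw [← Matrix.det_mul, hU2, Matrix.det_one]))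
  have hdiag : Matrix.diagonal (RCLike.ofReal ∘ hB.eigenvalues) = Matrix.diagonal hB.eigenvalues := by
    congr 1
  have hsp : Mᴴ * M = U * Matrix.diagonal hB.eigenvalues * star U := by
    rw [← hdiag]; exact hB.spectral_theorem
  have hdetM : M.det ≠ 0 := by
    have := (Matrix.isUnit_iff_isUnit_det _).1 hM
    exact this.ne_zero
  have hprod : (∏ i, hB.eigenvalues i) ≠ 0 := by
    have hd := hB.det_eq_prod_eigenvalues
    have hd2 : (Mᴴ * M).det = M.det * M.det := by
      rw [Matrix.det_mul, Matrix.det_conjTranspose, star_trivial]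
    rw [hd2] at hd
    intro h0
    apply mul_ne_zero hdetM hdetM
    rw [hd]
    exact_mod_cast h0
  have hl0 : ∀ i, hB.eigenvalues i ≠ 0 := fun i =>
    Finset.prod_ne_zero_iff.1 hprod i (Finset.mem_univ i)
  have e2inner : (Matrix.diagonal hB.eigenvalues)⁻¹
      = Matrix.diagonal (fun i => (hB.eigenvalues i)⁻¹) :=
    Matrix.inv_eq_right_inv (by
      rw [Matrix.diagonal_mul_diagonal,
        show (fun i => hB.eigenvalues i * (hB.eigenvalues i)⁻¹) = fun _ => (1:ℝ) from
          funext fun i => mul_inv_cancel₀ (hl0 i), Matrix.diagonal_one])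
  have e2 : (Mᴴ * M)⁻¹ = U * Matrix.diagonal (fun i => (hB.eigenvalues i)⁻¹) * U⁻¹ := by
    conv_lhs => rw [hsp]
    rw [Matrix.mul_inv_rev, Matrix.mul_inv_rev, hsUinv, hUinv, e2inner, mul_assoc]
  rw [e2, my_charpoly_conj _ _ hUu, my_charpoly_diagonal]

lemma my_eig_pos (M : Matrix (Fin n) (Fin n) ℝ) (hM : IsUnit M) (i : Fin n) :
    0 < (Matrix.isHermitian_conjTranspose_mul_self M).eigenvalues i := by
  have hB := Matrix.isHermitian_conjTranspose_mul_self M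
  have hnn := Matrix.eigenvalues_conjTranspose_mul_self_nonneg M i
  have hdetM : M.det ≠ 0 := ((Matrix.isUnit_iff_isUnit_det _).1 hM).ne_zero
  have hprod : (∏ j, hB.eigenvalues j) ≠ 0 := by
    have hd := hB.det_eq_prod_eigenvalues
    have hd2 : (Mᴴ * M).det = M.det * M.det := by
      rw [Matrix.det_mul, Matrix.det_conjTranspose, star_trivial]
    rw [hd2] at hd
    intro h0
    apply mul_ne_zero hdetM hdetM
    rw [hd]
    exact_mod_cast h0
  exact lt_of_le_of_ne hnn
    (Ne.symm (Finset.prod_ne_zero_iff.1 hprod i (Finset.mem_univ i)))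

lemma my_prod_eig (M : Matrix (Fin n) (Fin n) ℝ) :
    (∏ j, (Matrix.isHermitian_conjTranspose_mul_self M).eigenvalues j) = M.det ^ 2 := by
  have hB := Matrix.isHermitian_conjTranspose_mul_self M
  have hd := hB.det_eq_prod_eigenvalues
  have hd2 : (Mᴴ * M).det = M.det ^ 2 := by
    rw [Matrix.det_mul, Matrix.det_conjTranspose, star_trivial, sq]
  rw [hd2] at hd
  exact_mod_cast hd.symm

end AuxLemmas

theorem stmt_12 (n : ℕ) (hn : 2 ≤ n) (M : Matrix (Fin n) (Fin n) ℝ) (hM : IsUnit M)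
    (q : ℝ) (hq : q = 2 / ((n : ℝ) - 1)) :
    schattenNorm q M⁻¹ ≤ schattenNorm 2 M ^ ((n : ℕ) - 1 : ℕ) / |M.det| := by
  classical
  set l : Fin n → ℝ := (Matrix.isHermitian_conjTranspose_mul_self M).eigenvalues with hl
  set m : Fin n → ℝ := (Matrix.isHermitian_conjTranspose_mul_self M⁻¹).eigenvalues with hm
  have hn2 : (2:ℝ) ≤ (n:ℝ) := by exact_mod_cast hn
  have hnpos : (0:ℝ) < n := by linarith
  have hn1pos : (0:ℝ) < (n:ℝ) - 1 := by linarith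
  have hn1 : (1:ℕ) ≤ n := le_trans one_le_two hn
  have hcast : (((n - 1 : ℕ)) : ℝ) = (n:ℝ) - 1 := by
    rw [Nat.cast_sub hn1, Nat.cast_one]
  have hqpos : 0 < q := by rw [hq]; positivity
  have hq2 : q / 2 = 1 / ((n:ℝ) - 1) := by rw [hq]; field_simp
  have hinvq : 1 / q = ((n:ℝ) - 1) / 2 := by rw [hq, one_div_div]
  have hlpos : ∀ i, 0 < l i := my_eig_pos M hM
  have hmnn : ∀ i, 0 ≤ m i := fun i => Matrix.eigenvalues_conjTranspose_mul_self_nonneg M⁻¹ i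
  have hdetM : M.det ≠ 0 := ((Matrix.isUnit_iff_isUnit_det _).1 hM).ne_zero
  set S : ℝ := ∑ i, l i with hS
  set D : ℝ := M.det ^ 2 with hD
  have hDpos : 0 < D := by positivity
  have hne : Nonempty (Fin n) := ⟨⟨0, by omega⟩⟩
  have hSpos : 0 < S := Finset.sum_pos (fun i _ => hlpos i) Finset.univ_nonempty
  have hprodD : (∏ j, l j) = D := my_prod_eig M
  -- transfer singular values of M⁻¹ to eigenvalues of MᴴM
  have hsum : ∑ k, singularValues M⁻¹ k ^ q = ∑ k, ((l k)⁻¹) ^ (q/2) := by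
    have htrans := my_sum_comp_eq (my_key_charpoly_eq M hM) (fun t => t ^ (q/2))
    calc ∑ k, singularValues M⁻¹ k ^ q = ∑ k, (m k) ^ (q/2) := by
          refine Finset.sum_congr rfl fun k _ => ?_
          show Real.sqrt (m k) ^ q = (m k) ^ (q/2)
          rw [Real.sqrt_eq_rpow, ← Real.rpow_mul (hmnn k)]
          congr 1
          ring
      _ = ∑ k, ((l k)⁻¹) ^ (q/2) := htrans
  -- AM-GM bound on each term
  have hterm : ∀ k : Fin n, ((l k)⁻¹) ^ (q/2)
      ≤ ((1/((n:ℝ)-1)) * (S - l k)) / D ^ (q/2) := by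
    intro k
    have hprodnn : (0:ℝ) ≤ ∏ j ∈ Finset.univ.erase k, l j :=
      Finset.prod_nonneg fun j _ => (hlpos j).le
    have hproderase : l k * (∏ j ∈ Finset.univ.erase k, l j) = D := by
      rw [← hprodD, Finset.mul_prod_erase Finset.univ l (Finset.mem_univ k)]
    have hinv : (l k)⁻¹ = (∏ j ∈ Finset.univ.erase k, l j) / D := by
      rw [eq_div_iff hDpos.ne', ← hproderase, ← mul_assoc,
        inv_mul_cancel₀ (hlpos k).ne', one_mul]
    rw [hinv, Real.div_rpow hprodnn hDpos.le]
    have hDq : 0 < D ^ (q/2) := Real.rpow_pos_of_pos hDpos _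
    rw [div_le_div_iff₀ hDq hDq]
    apply mul_le_mul_of_nonneg_right _ hDq.le
    -- numerator: AM-GM
    rw [hq2]
    set r : ℝ := 1 / ((n:ℝ) - 1) with hrdef
    have hrpos : 0 < r := by positivity
    have hcard : ((Finset.univ.erase k).card : ℝ) = (n:ℝ) - 1 := by
      rw [Finset.card_erase_of_mem (Finset.mem_univ k), Finset.card_univ, Fintype.card_fin,
        hcast]
    have hw' : ∑ _j ∈ Finset.univ.erase k, r = 1 := by
      rw [Finset.sum_const, nsmul_eq_mul, hcard, hrdef]
      field_simp
    calc (∏ j ∈ Finset.univ.erase k, l j) ^ r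
        = ∏ j ∈ Finset.univ.erase k, (l j) ^ r := by
          rw [Real.finset_prod_rpow _ _ (fun j _ => (hlpos j).le)]
      _ ≤ ∑ j ∈ Finset.univ.erase k, r * l j :=
          Real.geom_mean_le_arith_mean_weighted _ _ _ (fun j _ => hrpos.le) hw'
            (fun j _ => (hlpos j).le)
      _ = r * (S - l k) := by
          rw [← Finset.mul_sum, Finset.sum_erase_eq_sub (Finset.mem_univ k), hS]
  -- sum the bounds
  have hsumle : ∑ k, ((l k)⁻¹) ^ (q/2) ≤ S / D ^ (q/2) := by
    calc ∑ k, ((l k)⁻¹) ^ (q/2)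
        ≤ ∑ k : Fin n, ((1/((n:ℝ)-1)) * (S - l k)) / D ^ (q/2) :=
          Finset.sum_le_sum fun k _ => hterm k
      _ = ((1/((n:ℝ)-1)) * ((n:ℝ) * S - S)) / D ^ (q/2) := by
          rw [← Finset.sum_div, ← Finset.mul_sum, Finset.sum_sub_distrib,
            Finset.sum_const, Finset.card_univ, Fintype.card_fin, nsmul_eq_mul, ← hS]
      _ = S / D ^ (q/2) := by
          congr 1
          field_simp
  have hsnn : 0 ≤ ∑ k, singularValues M⁻¹ k ^ q :=
    Finset.sum_nonneg fun k _ => Real.rpow_nonneg (Real.sqrt_nonneg _) _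
  have h1 : schattenNorm q M⁻¹ ≤ ((1/(n:ℝ)) * (S / D^(q/2))) ^ (1/q) := by
    rw [schattenNorm]
    refine Real.rpow_le_rpow (by positivity) ?_ (by positivity)
    rw [hsum]
    refine mul_le_mul_of_nonneg_left hsumle (by positivity)
  have h2 : schattenNorm 2 M = ((1/(n:ℝ)) * S) ^ (1/(2:ℝ)) := by
    rw [schattenNorm]
    congr 2
    refine Finset.sum_congr rfl fun k _ => ?_
    show Real.sqrt (l k) ^ (2:ℝ) = l k
    rw [show (2:ℝ) = ((2:ℕ):ℝ) by norm_num, Real.rpow_natCast, Real.sq_sqrt (hlpos k).le]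
  have h3 : schattenNorm 2 M ^ ((n:ℕ) - 1 : ℕ) = ((1/(n:ℝ)) * S) ^ (((n:ℝ)-1)/2) := by
    rw [h2, ← Real.rpow_natCast (((1/(n:ℝ))*S)^(1/(2:ℝ))) (n-1), ← Real.rpow_mul (by positivity),
      hcast]
    congr 1
    ring
  calc schattenNorm q M⁻¹ ≤ ((1/(n:ℝ)) * (S / D^(q/2))) ^ (1/q) := h1
    _ = ((1/(n:ℝ)) * S) ^ (((n:ℝ)-1)/2) / |M.det| := by
        rw [← mul_div_assoc,
          Real.div_rpow (by positivity) ((Real.rpow_pos_of_pos hDpos _).le),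
          ← Real.rpow_mul hDpos.le,
          show (q/2)*(1/q) = (1/2:ℝ) by field_simp,
          ← Real.sqrt_eq_rpow, hD, Real.sqrt_sq_eq_abs, hinvq]
    _ = schattenNorm 2 M ^ ((n:ℕ) - 1 : ℕ) / |M.det| := by rw [h3]
end

section
/- Let σ₁,…,σ_n > 0 and q = 2/(n-1) with n ≥ 2. Then (Π_j σ_j)·((1/n)·Σ_k σ_k^{-q})^{1/q} ≤ ((1/n)·Σ_k σ_k²)^{(n-1)/2}. -/
theorem stmt_13 (n : ℕ) (hn : 2 ≤ n) (σ : Fin n → ℝ) (hσ : ∀ k, 0 < σ k)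
    (q : ℝ) (hq : q = 2 / ((n : ℝ) - 1)) :
    (∏ j, σ j) * ((1 / (n : ℝ)) * ∑ k, σ k ^ (-q)) ^ (1 / q)
      ≤ ((1 / (n : ℝ)) * ∑ k, σ k ^ 2) ^ (((n : ℝ) - 1) / 2) := by
  have hn2 : (2:ℝ) ≤ (n:ℝ) := by exact_mod_cast hn
  have hn1 : (0:ℝ) < (n:ℝ) - 1 := by linarith
  have hnpos : (0:ℝ) < n := by linarith
  have hq0 : 0 < q := by rw [hq]; positivity
  have hP : 0 < ∏ j, σ j := Finset.prod_pos (fun j _ => hσ j)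
  have hA : 0 ≤ (1/(n:ℝ)) * ∑ k, σ k ^ (-q) := by
    apply mul_nonneg (by positivity)
    exact Finset.sum_nonneg fun k _ => (Real.rpow_pos_of_pos (hσ k) _).le
  have hB : 0 ≤ (1/(n:ℝ)) * ∑ k, σ k ^ 2 := by positivity
  have h1q : 1/q = ((n:ℝ)-1)/2 := by rw [hq]; field_simp
  -- cardinality of erase
  have hcard : ∀ k : Fin n, ((Finset.univ.erase k).card : ℝ) = (n:ℝ) - 1 := by
    intro k
    rw [Finset.card_erase_of_mem (Finset.mem_univ k), Finset.card_univ, Fintype.card_fin]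
    push_cast
    have : 1 ≤ n := by omega
    rw [Nat.cast_sub this]
    simp
  -- key pointwise AM-GM
  have key1 : ∀ k : Fin n, (∏ j, σ j) ^ q * σ k ^ (-q)
      ≤ (1/((n:ℝ)-1)) * ∑ j ∈ Finset.univ.erase k, σ j ^ 2 := by
    intro k
    have hsplit : ∏ j, σ j = σ k * ∏ j ∈ Finset.univ.erase k, σ j :=
      (Finset.mul_prod_erase Finset.univ σ (Finset.mem_univ k)).symm
    have hPe : 0 < ∏ j ∈ Finset.univ.erase k, σ j :=
      Finset.prod_pos (fun j _ => hσ j)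
    have hL : (∏ j, σ j) ^ q * σ k ^ (-q)
        = ∏ j ∈ Finset.univ.erase k, (σ j ^ 2) ^ (1/((n:ℝ)-1)) := by
      rw [hsplit, Real.mul_rpow (hσ k).le hPe.le, Real.rpow_neg (hσ k).le,
        mul_assoc, mul_comm ((σ k)^q), mul_assoc]
      rw [inv_mul_cancel₀ (Real.rpow_pos_of_pos (hσ k) q).ne', mul_one]
      rw [← Real.finset_prod_rpow _ _ (fun j _ => (hσ j).le)]
      apply Finset.prod_congr rfl
      intro j _
      rw [← Real.rpow_natCast (σ j) 2, ← Real.rpow_mul (hσ j).le, hq]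
      congr 1
      push_cast
      ring
    rw [hL, Finset.mul_sum]
    have := Real.geom_mean_le_arith_mean_weighted (Finset.univ.erase k)
      (fun _ => 1/((n:ℝ)-1)) (fun j => σ j ^ 2)
      (fun i _ => by positivity)
      (by rw [Finset.sum_const, nsmul_eq_mul, hcard]; field_simp)
      (fun i _ => by positivity)
    exact this
  -- sum up
  have key : (∏ j, σ j) ^ q * ((1/(n:ℝ)) * ∑ k, σ k ^ (-q)) ≤ (1/(n:ℝ)) * ∑ k, σ k ^ 2 := by
    have hsum : ∑ k, (∏ j, σ j) ^ q * σ k ^ (-q)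
        ≤ ∑ k : Fin n, (1/((n:ℝ)-1)) * ∑ j ∈ Finset.univ.erase k, σ j ^ 2 :=
      Finset.sum_le_sum (fun k _ => key1 k)
    have hrhs : ∑ k : Fin n, (1/((n:ℝ)-1)) * ∑ j ∈ Finset.univ.erase k, σ j ^ 2
        = ∑ k, σ k ^ 2 := by
      have : ∀ k : Fin n, ∑ j ∈ Finset.univ.erase k, σ j ^ 2
          = (∑ j, σ j ^ 2) - σ k ^ 2 := by
        intro k
        rw [← Finset.add_sum_erase Finset.univ (fun j => σ j ^ 2) (Finset.mem_univ k)]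
        ring
      simp_rw [this]
      rw [← Finset.mul_sum, Finset.sum_sub_distrib, Finset.sum_const, Finset.card_univ,
        Fintype.card_fin, nsmul_eq_mul]
      field_simp
    calc (∏ j, σ j) ^ q * ((1/(n:ℝ)) * ∑ k, σ k ^ (-q))
        = (1/(n:ℝ)) * ∑ k, (∏ j, σ j) ^ q * σ k ^ (-q) := by
          simp_rw [Finset.mul_sum]
          apply Finset.sum_congr rfl; intros; ring
      _ ≤ (1/(n:ℝ)) * ∑ k, σ k ^ 2 := by
          rw [← hrhs] at *
          have h := mul_le_mul_of_nonneg_left hsum (by positivity : (0:ℝ) ≤ 1/(n:ℝ))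
          linarith [h]
  calc (∏ j, σ j) * ((1/(n:ℝ)) * ∑ k, σ k ^ (-q)) ^ (1/q)
      = ((∏ j, σ j) ^ q * ((1/(n:ℝ)) * ∑ k, σ k ^ (-q))) ^ (1/q) := by
        rw [Real.mul_rpow (Real.rpow_pos_of_pos hP q).le hA, ← Real.rpow_mul hP.le,
          mul_one_div_cancel hq0.ne', Real.rpow_one]
    _ ≤ ((1/(n:ℝ)) * ∑ k, σ k ^ 2) ^ (1/q) :=
        Real.rpow_le_rpow (by positivity) key (by positivity)
    _ = ((1/(n:ℝ)) * ∑ k, σ k ^ 2) ^ (((n:ℝ)-1)/2) := by rw [h1q]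
end

section
/- Let K ⊂ ℝⁿ (n ≥ 2) be a compact set with positive volume and irreducible isometry group, and let M be an invertible n×n real matrix. Then I(MK) = |det M| · ‖M‖_{2,n}² · I(K), where I denotes the second moment of mass about the centroid and ‖M‖_{2,n}² = (1/n)·tr(M Mᵀ). -/
open MeasureTheory Matrix

/-- Centroid of a set `K` of positive finite volume. -/
noncomputable def centroid (n : ℕ) (K : Set (Fin n → ℝ)) : Fin n → ℝ :=
  (volume K).toReal⁻¹ • ∫ x in K, x ∂volume

/-- Second moment of mass about the centroid. -/
noncomputable def momentOfInertia (n : ℕ) (K : Set (Fin n → ℝ)) : ℝ :=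
  ∫ x in K, ∑ i, (x i - centroid n K i) ^ 2 ∂volume

section aux

variable {n : ℕ}

lemma aux_intOn {K : Set (Fin n → ℝ)} (hK : IsCompact K) {f : (Fin n → ℝ) → ℝ}
    (hf : Continuous f) : IntegrableOn f K volume :=
  hf.continuousOn.integrableOn_compact hK

lemma aux_det_mulVecLin (M : Matrix (Fin n) (Fin n) ℝ) :
    LinearMap.det M.mulVecLin = M.det := by
  rw [← Matrix.toLin'_apply', LinearMap.det_toLin']

lemma aux_cov (K : Set (Fin n → ℝ)) (hKm : MeasurableSet K)
    (M : Matrix (Fin n) (Fin n) ℝ) (hM : IsUnit M) {F : Type*} [NormedAddCommGroup F]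
    [NormedSpace ℝ F] (g : (Fin n → ℝ) → F) :
    ∫ y in M.mulVec '' K, g y ∂volume = |M.det| • ∫ x in K, g (M.mulVec x) ∂volume := by
  have hinj : Function.Injective M.mulVec :=
    (Matrix.mulVec_injective_iff_isUnit).mpr hM
  have himg : M.mulVec '' K = (LinearMap.toContinuousLinearMap M.mulVecLin) '' K := rfl
  rw [himg, integral_image_eq_integral_abs_det_fderiv_smul volume hKm
    (f' := fun _ => LinearMap.toContinuousLinearMap M.mulVecLin)
    (fun x _ => (LinearMap.toContinuousLinearMap M.mulVecLin).hasFDerivAt.hasFDerivWithinAt)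
    hinj.injOn g]
  have hdet : (LinearMap.toContinuousLinearMap M.mulVecLin).det = M.det := by
    rw [ContinuousLinearMap.det, LinearMap.coe_toContinuousLinearMap, aux_det_mulVecLin]
  simp_rw [hdet]
  rw [integral_smul]
  rfl

/-- The second-moment matrix. -/
noncomputable def auxB (K : Set (Fin n → ℝ)) : Matrix (Fin n) (Fin n) ℝ :=
  fun i j => ∫ x in K, x i * x j ∂volume

lemma aux_B_image {K : Set (Fin n → ℝ)} (hK : IsCompact K)
    (M : Matrix (Fin n) (Fin n) ℝ) (hM : IsUnit M) :
    auxB (M.mulVec '' K) = |M.det| • (M * auxB K * Mᵀ) := by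
  ext i j
  have hcov := aux_cov K hK.measurableSet M hM (fun y => y i * y j)
  simp only [auxB, Matrix.smul_apply, smul_eq_mul]
  rw [hcov, smul_eq_mul]
  congr 1
  have hexp : ∀ x : Fin n → ℝ, (M.mulVec x) i * (M.mulVec x) j
      = ∑ k, ∑ l, (M i k * M j l) * (x k * x l) := by
    intro x
    simp only [Matrix.mulVec, dotProduct]
    rw [Finset.sum_mul_sum]
    congr 1; ext k; congr 1; ext l; ring
  simp_rw [hexp]
  rw [integral_finset_sum]
  · have : ∀ k, ∫ x in K, ∑ l, (M i k * M j l) * (x k * x l) ∂volume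
        = ∑ l, (M i k * M j l) * ∫ x in K, x k * x l ∂volume := by
      intro k
      rw [integral_finset_sum]
      · exact Finset.sum_congr rfl fun l _ => integral_const_mul _ _
      · intro l _
        exact (aux_intOn hK (continuous_const.mul
          ((continuous_apply k).mul (continuous_apply l)))).mono_set (le_refl _)
    simp_rw [this]
    have hBdef : ∀ k l : Fin n, auxB K k l = ∫ x in K, x k * x l ∂volume := fun _ _ => rfl
    simp_rw [Matrix.mul_apply, Matrix.transpose_apply, Finset.sum_mul, hBdef]
    rw [Finset.sum_comm]
    refine Finset.sum_congr rfl fun l _ => Finset.sum_congr rfl fun k _ => by ring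
  · intro k _
    apply aux_intOn hK
    exact continuous_finset_sum _ fun l _ => continuous_const.mul
      ((continuous_apply k).mul (continuous_apply l))

lemma aux_centroid_image {K : Set (Fin n → ℝ)} (hK : IsCompact K) (hpos : 0 < volume K)
    (M : Matrix (Fin n) (Fin n) ℝ) (hM : IsUnit M) :
    centroid n (M.mulVec '' K) = M.mulVec (centroid n K) := by
  have hdet0 : M.det ≠ 0 := ((Matrix.isUnit_iff_isUnit_det M).mp hM).ne_zero
  have habs : |M.det| ≠ 0 := abs_ne_zero.mpr hdet0
  have hvol : volume (M.mulVec '' K) = ENNReal.ofReal |M.det| * volume K := by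
    have := MeasureTheory.Measure.addHaar_image_linearMap (volume : Measure (Fin n → ℝ))
      M.mulVecLin K
    rwa [aux_det_mulVecLin] at this
  have hint : ∫ y in M.mulVec '' K, y ∂volume
      = |M.det| • ∫ x in K, M.mulVec x ∂volume := aux_cov K hK.measurableSet M hM _
  have hcomm : ∫ x in K, M.mulVec x ∂volume
      = M.mulVec (∫ x in K, x ∂volume) := by
    exact ContinuousLinearMap.integral_comp_comm (LinearMap.toContinuousLinearMap M.mulVecLin)
      ((continuous_id.continuousOn.integrableOn_compact hK :
        IntegrableOn (fun x : Fin n → ℝ => x) K volume))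
  have hft : volume K ≠ ⊤ := hK.measure_lt_top.ne
  have hvr : (volume K).toReal ≠ 0 :=
    (ENNReal.toReal_pos hpos.ne' hft).ne'
  rw [centroid, centroid, hvol, hint, hcomm, ENNReal.toReal_mul,
    ENNReal.toReal_ofReal (abs_nonneg _), Matrix.mulVec_smul, smul_smul]
  congr 1
  rw [mul_inv]
  field_simp

lemma aux_unit_of_orth {U : Matrix (Fin n) (Fin n) ℝ} (hU : Uᵀ * U = 1) : IsUnit U := by
  apply (Matrix.isUnit_iff_isUnit_det U).mpr
  apply IsUnit.of_mul_eq_one U.det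
  have := congrArg Matrix.det hU
  rwa [Matrix.det_mul, Matrix.det_transpose, Matrix.det_one] at this

lemma aux_abs_det_orth {U : Matrix (Fin n) (Fin n) ℝ} (hU : Uᵀ * U = 1) : |U.det| = 1 := by
  have h2 : U.det * U.det = 1 := by
    have := congrArg Matrix.det hU
    rwa [Matrix.det_mul, Matrix.det_transpose, Matrix.det_one] at this
  nlinarith [abs_nonneg U.det, abs_mul_abs_self U.det]

end aux

theorem stmt_15 (n : ℕ) (hn : 2 ≤ n) (K : Set (Fin n → ℝ))
    (hK : IsCompact K) (hpos : 0 < volume K)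
    (hirred : ∀ x : Fin n → ℝ, x ≠ 0 →
      Submodule.span ℝ {y : Fin n → ℝ |
        ∃ U : Matrix (Fin n) (Fin n) ℝ, Uᵀ * U = 1 ∧ U.mulVec '' K = K ∧ y = U.mulVec x} = ⊤)
    (M : Matrix (Fin n) (Fin n) ℝ) (hM : IsUnit M) :
    momentOfInertia n (M.mulVec '' K)
      = |M.det| * ((M * Mᵀ).trace / n) * momentOfInertia n K := by
  classical
  -- centroid of K is 0
  have hc0 : centroid n K = 0 := by
    by_contra hc
    have hspan := hirred _ hc
    have hsub : {y : Fin n → ℝ | ∃ U : Matrix (Fin n) (Fin n) ℝ,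
        Uᵀ * U = 1 ∧ U.mulVec '' K = K ∧ y = U.mulVec (centroid n K)} ⊆ {centroid n K} := by
      rintro y ⟨U, hU, hUK, rfl⟩
      have := aux_centroid_image hK hpos U (aux_unit_of_orth hU)
      rw [hUK] at this
      simp [← this]
    have hle : (⊤ : Submodule ℝ (Fin n → ℝ)) ≤ Submodule.span ℝ {centroid n K} := by
      rw [← hspan]; exact Submodule.span_mono hsub
    have h1 : Module.finrank ℝ (Submodule.span ℝ {centroid n K}) = 1 :=
      finrank_span_singleton hc
    have h2 : Submodule.span ℝ {centroid n K} = ⊤ := top_le_iff.mp hle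
    have h3 : Module.finrank ℝ (Fin n → ℝ) = 1 := by
      rw [← finrank_top ℝ (Fin n → ℝ), ← h2]; exact h1
    have h4 : Module.finrank ℝ (Fin n → ℝ) = n := by
      simp [Module.finrank_pi]
    omega
  -- Schur: auxB K is a multiple of the identity
  have hBsymm : ∀ i j, auxB K i j = auxB K j i := by
    intro i j
    unfold auxB
    congr 1; ext x; ring
  have hBherm : (auxB K).IsHermitian := by
    ext i j
    simp only [Matrix.conjTranspose_apply, star_trivial]
    exact hBsymm j i
  have hi0 : (0 : ℕ) < n := by omega
  set i0 : Fin n := ⟨0, hi0⟩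
  set lam : ℝ := hBherm.eigenvalues i0
  set v : Fin n → ℝ := ⇑(hBherm.eigenvectorBasis i0)
  have hv : auxB K *ᵥ v = lam • v := hBherm.mulVec_eigenvectorBasis i0
  have hv0 : v ≠ 0 := by
    intro h
    apply hBherm.eigenvectorBasis.orthonormal.ne_zero i0
    ext i
    exact congrFun h i
  have hBeq : auxB K = lam • (1 : Matrix (Fin n) (Fin n) ℝ) := by
    have hspan := hirred v hv0
    have hker : {y : Fin n → ℝ | ∃ U : Matrix (Fin n) (Fin n) ℝ,
        Uᵀ * U = 1 ∧ U.mulVec '' K = K ∧ y = U.mulVec v} ⊆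
        ↑(LinearMap.ker (auxB K - lam • (1 : Matrix (Fin n) (Fin n) ℝ)).mulVecLin) := by
      rintro y ⟨U, hU, hUK, rfl⟩
      have hUunit := aux_unit_of_orth hU
      have hB' : auxB K = U * auxB K * Uᵀ := by
        have := aux_B_image hK U hUunit
        rw [hUK, aux_abs_det_orth hU, one_smul] at this
        exact this
      have hcommU : auxB K * U = U * auxB K := by
        calc auxB K * U = U * auxB K * Uᵀ * U := by rw [← hB']
        _ = U * auxB K * (Uᵀ * U) := by rw [mul_assoc]
        _ = U * auxB K := by rw [hU, mul_one]
      have : auxB K *ᵥ (U *ᵥ v) = lam • (U *ᵥ v) := by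
        rw [Matrix.mulVec_mulVec, hcommU, ← Matrix.mulVec_mulVec, hv, Matrix.mulVec_smul]
      simp only [SetLike.mem_coe, LinearMap.mem_ker, Matrix.mulVecLin_apply,
        Matrix.sub_mulVec, Matrix.smul_mulVec, Matrix.one_mulVec]
      rw [this]
      exact sub_self _
    have hkertop : LinearMap.ker (auxB K - lam • (1 : Matrix (Fin n) (Fin n) ℝ)).mulVecLin = ⊤ := by
      rw [← top_le_iff, ← hspan]
      exact Submodule.span_le.mpr hker
    have hzero : (auxB K - lam • (1 : Matrix (Fin n) (Fin n) ℝ)).mulVecLin = 0 :=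
      LinearMap.ker_eq_top.mp hkertop
    have : auxB K - lam • (1 : Matrix (Fin n) (Fin n) ℝ) = 0 := by
      ext i j
      have := congrFun (congrArg (fun f => f.toFun) hzero) (Pi.single j 1)
      have h2 := congrFun this i
      simpa [Matrix.mulVecLin_apply, Matrix.mulVec_single, Matrix.one_apply, Pi.single_apply] using h2
    exact sub_eq_zero.mp this
  -- moment of inertia equals trace of auxB when centroid is 0
  have hmom : ∀ (K' : Set (Fin n → ℝ)), IsCompact K' → centroid n K' = 0 →
      momentOfInertia n K' = ∑ i, auxB K' i i := by
    intro K' hK' hc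
    unfold momentOfInertia
    rw [integral_finset_sum]
    · refine Finset.sum_congr rfl fun i _ => ?_
      have he : ∀ x : Fin n → ℝ, (x i - centroid n K' i) ^ 2 = x i * x i := by
        intro x; rw [hc, Pi.zero_apply, sub_zero, sq]
      simp_rw [he]
      rfl
    · intro i _
      exact aux_intOn hK' (((continuous_apply i).sub continuous_const).pow 2)
  have hcont : Continuous M.mulVec := (LinearMap.toContinuousLinearMap M.mulVecLin).continuous
  have hMK : IsCompact (M.mulVec '' K) := hK.image hcont
  have hcMK : centroid n (M.mulVec '' K) = 0 := by
    rw [aux_centroid_image hK hpos M hM, hc0, Matrix.mulVec_zero]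
  rw [hmom _ hMK hcMK, hmom _ hK hc0, aux_B_image hK M hM, hBeq]
  have htr : ∀ A : Matrix (Fin n) (Fin n) ℝ, ∑ i, A i i = A.trace := fun _ => rfl
  rw [htr, htr, Matrix.mul_smul, Matrix.mul_one, Matrix.smul_mul, Matrix.trace_smul,
    Matrix.trace_smul, Matrix.trace_smul, Matrix.trace_one, Fintype.card_fin]
  have hn0 : (n : ℝ) ≠ 0 := Nat.cast_ne_zero.mpr (by omega)
  field_simp
  ring
end

section
/- If a Borel probability measure μ on ℝⁿ gives measure zero to the set {(x,y) : x_j ≠ y_j and x_k ≠ y_k} under μ × μ (for fixed indices j ≠ k), then μ has full measure on some hyperplane {x : x_j = c} or {x : x_k = c} for some constant c. -/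
open MeasureTheory ENNReal

theorem stmt_16 (n : ℕ) (μ : Measure (Fin n → ℝ)) [IsProbabilityMeasure μ]
    (j k : Fin n) (hjk : j ≠ k)
    (h : (μ.prod μ) {p : (Fin n → ℝ) × (Fin n → ℝ) | p.1 j ≠ p.2 j ∧ p.1 k ≠ p.2 k} = 0) :
    ∃ c : ℝ, μ {x | x j = c} = 1 ∨ μ {x | x k = c} = 1 := by
  have hmj : MeasurableSet {p : (Fin n → ℝ) × (Fin n → ℝ) | p.1 j ≠ p.2 j} :=
    (measurableSet_eq_fun ((measurable_pi_apply j).comp measurable_fst)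
      ((measurable_pi_apply j).comp measurable_snd)).compl
  have hmk : MeasurableSet {p : (Fin n → ℝ) × (Fin n → ℝ) | p.1 k ≠ p.2 k} :=
    (measurableSet_eq_fun ((measurable_pi_apply k).comp measurable_fst)
      ((measurable_pi_apply k).comp measurable_snd)).compl
  have hm : MeasurableSet {p : (Fin n → ℝ) × (Fin n → ℝ) | p.1 j ≠ p.2 j ∧ p.1 k ≠ p.2 k} :=
    hmj.inter hmk
  rw [Measure.measure_prod_null hm] at h
  obtain ⟨y, hy⟩ := h.exists
  have hy' : μ {z | y j ≠ z j ∧ y k ≠ z k} = 0 := hy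
  set A : Set (Fin n → ℝ) := {z | z j = y j} with hA
  set B : Set (Fin n → ℝ) := {z | z k = y k} with hB
  have hAm : MeasurableSet A := measurableSet_eq_fun (measurable_pi_apply j) measurable_const
  have hBm : MeasurableSet B := measurableSet_eq_fun (measurable_pi_apply k) measurable_const
  have hcompl : (A ∪ B)ᶜ = {z | y j ≠ z j ∧ y k ≠ z k} := by
    ext z
    simp [A, B, Set.mem_union, not_or, eq_comm]
  have hAB : μ (A ∪ B) = 1 := by
    rw [← prob_compl_eq_zero_iff (hAm.union hBm), hcompl]
    exact hy'
  by_contra hcon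
  push_neg at hcon
  have hA1 : μ A ≠ 1 := (hcon (y j)).1
  have hB1 : μ B ≠ 1 := (hcon (y k)).2
  have hBA : μ (B \ A) ≠ 0 := by
    intro h0
    apply hA1
    have : (1 : ℝ≥0∞) ≤ μ A := by
      calc (1 : ℝ≥0∞) = μ (A ∪ B) := hAB.symm
        _ ≤ μ A + μ (B \ A) := by
            exact (measure_union_le _ _).trans_eq' (by rw [Set.union_diff_self])
        _ = μ A := by rw [h0, add_zero]
    exact le_antisymm prob_le_one this
  have hABd : μ (A \ B) ≠ 0 := by
    intro h0
    apply hB1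
    have : (1 : ℝ≥0∞) ≤ μ B := by
      calc (1 : ℝ≥0∞) = μ (A ∪ B) := hAB.symm
        _ ≤ μ B + μ (A \ B) := by
            exact (measure_union_le _ _).trans_eq' (by rw [Set.union_diff_self, Set.union_comm])
        _ = μ B := by rw [h0, add_zero]
    exact le_antisymm prob_le_one this
  have hsub : (A \ B) ×ˢ (B \ A) ⊆ {p : (Fin n → ℝ) × (Fin n → ℝ) | p.1 j ≠ p.2 j ∧ p.1 k ≠ p.2 k} := by
    rintro ⟨x, z⟩ ⟨⟨hxA, hxB⟩, hzB, hzA⟩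
    simp only [A, B, Set.mem_setOf_eq] at hxA hxB hzB hzA
    refine ⟨fun he => hzA ?_, fun he => hxB ?_⟩
    · show z j = y j
      rw [← show x j = z j from he]; exact hxA
    · show x k = y k
      rw [show x k = z k from he]; exact hzB
  have hzero : μ.prod μ ((A \ B) ×ˢ (B \ A)) = 0 :=
    measure_mono_null hsub ((Measure.measure_prod_null hm).mpr h)
  rw [Measure.prod_prod] at hzero
  rcases mul_eq_zero.mp hzero with h1 | h2
  exacts [hABd h1, hBA h2]
end

section
/- Let μ be a Borel probability measure on ℝⁿ invariant under a compact irreducible group 𝒰 of orthogonal matrices. If μ has full measure on some affine hyperplane H = {x : xᵀy = s} (y ≠ 0), then μ is a Dirac point mass. -/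
open MeasureTheory Matrix

theorem stmt_17 (n : ℕ) (μ : Measure (Fin n → ℝ)) [IsProbabilityMeasure μ]
    (𝒰 : Set (Matrix (Fin n) (Fin n) ℝ))
    (horth : ∀ U ∈ 𝒰, Uᵀ * U = 1)
    (hone : (1 : Matrix (Fin n) (Fin n) ℝ) ∈ 𝒰)
    (hmul : ∀ U ∈ 𝒰, ∀ V ∈ 𝒰, U * V ∈ 𝒰)
    (hinvmem : ∀ U ∈ 𝒰, Uᵀ ∈ 𝒰)
    (hcompact : IsCompact 𝒰)
    (hirred : ∀ x : Fin n → ℝ, x ≠ 0 →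
      Submodule.span ℝ {y : Fin n → ℝ | ∃ U ∈ 𝒰, y = U.mulVec x} = ⊤)
    (hinv : ∀ U ∈ 𝒰, Measure.map (fun x => U.mulVec x) μ = μ)
    (y : Fin n → ℝ) (hy : y ≠ 0) (s : ℝ)
    (hfull : μ {x | ∑ i, x i * y i = s} = 1) :
    ∃ z : Fin n → ℝ, μ {z} = 1 := by
  classical
  set S : Set (Fin n → ℝ) := {w : Fin n → ℝ | ∃ U ∈ 𝒰, w = U.mulVec y} with hSdef
  have hspanS : Submodule.span ℝ S = ⊤ := hirred y hy
  obtain ⟨t, hts, hspan, hli⟩ := exists_linearIndependent ℝ S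
  rw [hspanS] at hspan
  have htfin : t.Finite := hli.setFinite
  -- measurability of hyperplanes
  have hmeas : ∀ v : Fin n → ℝ, MeasurableSet {x : Fin n → ℝ | ∑ i, x i * v i = s} := by
    intro v
    have hm : Measurable fun x : Fin n → ℝ => ∑ i, x i * v i :=
      Finset.measurable_sum _ (fun i _ => (measurable_pi_apply i).mul_const _)
    exact hm (measurableSet_singleton s)
  -- every hyperplane in direction v ∈ t has full measure
  have hone' : ∀ v ∈ t, μ {x : Fin n → ℝ | ∑ i, x i * v i = s} = 1 := by
    intro v hv
    obtain ⟨U, hU, rfl⟩ := hts hv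
    have hW : Uᵀ ∈ 𝒰 := hinvmem U hU
    have hmeasW : Measurable fun x : Fin n → ℝ => (Uᵀ).mulVec x :=
      (LinearMap.continuous_of_finiteDimensional (Matrix.mulVecLin (Uᵀ))).measurable
    have hkey : ∀ x : Fin n → ℝ, ∑ i, ((Uᵀ).mulVec x) i * y i = ∑ i, x i * (U.mulVec y) i := by
      intro x
      simp only [Matrix.mulVec, dotProduct, Matrix.transpose_apply,
        Finset.sum_mul, Finset.mul_sum]
      rw [Finset.sum_comm]
      exact Finset.sum_congr rfl fun i _ => Finset.sum_congr rfl fun j _ => by ring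
    have hset : {x : Fin n → ℝ | ∑ i, x i * (U.mulVec y) i = s}
        = (fun x => (Uᵀ).mulVec x) ⁻¹' {x | ∑ i, x i * y i = s} := by
      ext x
      simp only [Set.mem_setOf_eq, Set.mem_preimage, hkey]
    rw [hset, ← Measure.map_apply hmeasW (hmeas y), hinv (Uᵀ) hW, hfull]
  -- the intersection
  set A : Set (Fin n → ℝ) := ⋂ v ∈ t, {x : Fin n → ℝ | ∑ i, x i * v i = s} with hAdef
  have hAmeas : MeasurableSet A :=
    MeasurableSet.biInter htfin.countable (fun v _ => hmeas v)
  have hAfull : μ A = 1 := by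
    have hc : μ Aᶜ = 0 := by
      rw [hAdef, Set.compl_iInter₂]
      refine measure_biUnion_null_iff htfin.countable |>.mpr ?_
      intro v hv
      rw [measure_compl (hmeas v) (measure_ne_top μ _), hone' v hv, measure_univ]
      simp
    rwa [prob_compl_eq_zero_iff hAmeas] at hc
  -- A is nonempty
  obtain ⟨z, hz⟩ := nonempty_of_measure_ne_zero (μ := μ) (by rw [hAfull]; exact one_ne_zero)
  -- A is a subsingleton
  have hsub : ∀ a ∈ A, ∀ b ∈ A, a = b := by
    intro a ha b hb
    have hd : ∀ v ∈ t, ∑ i, (a i - b i) * v i = 0 := by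
      intro v hv
      have ha' : ∑ i, a i * v i = s := by
        have := Set.mem_iInter₂.mp ha v hv; exact this
      have hb' : ∑ i, b i * v i = s := by
        have := Set.mem_iInter₂.mp hb v hv; exact this
      have : ∑ i, (a i - b i) * v i = (∑ i, a i * v i) - ∑ i, b i * v i := by
        rw [← Finset.sum_sub_distrib]
        exact Finset.sum_congr rfl fun i _ => by ring
      rw [this, ha', hb', sub_self]
    set d : Fin n → ℝ := a - b with hddef
    have hdspan : ∀ w ∈ Submodule.span ℝ t, ∑ i, d i * w i = 0 := by
      intro w hw
      induction hw using Submodule.span_induction with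
      | mem w hwmem => simpa [hddef, Pi.sub_apply] using hd w hwmem
      | zero => simp
      | add w₁ w₂ _ _ h1 h2 => simp [Pi.add_apply, mul_add, Finset.sum_add_distrib, h1, h2]
      | smul c w _ h =>
          have hc : ∑ i, d i * (c • w) i = c * ∑ i, d i * w i := by
            rw [Finset.mul_sum]
            exact Finset.sum_congr rfl fun i _ => by
              simp only [Pi.smul_apply, smul_eq_mul]; ring
          rw [hc, h, mul_zero]
    have hdd : ∑ i, d i * d i = 0 := hdspan d (hspan ▸ Submodule.mem_top)
    have hd0 : d = 0 := by
      funext i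
      have := (Finset.sum_eq_zero_iff_of_nonneg
        (fun i _ => mul_self_nonneg (d i))).mp hdd i (Finset.mem_univ i)
      exact mul_self_eq_zero.mp this
    have : a - b = 0 := hd0
    exact sub_eq_zero.mp this
  refine ⟨z, ?_⟩
  have hAz : A ⊆ {z} := fun a ha => by
    simp only [Set.mem_singleton_iff]
    exact hsub a ha z hz
  have h1 : 1 ≤ μ {z} := hAfull ▸ measure_mono hAz
  exact le_antisymm prob_le_one h1
end
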